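/- In the Cantor system (X,f) of the construction, any two points are proximal: if x ≠ y are points of X both distinct from p, then liminf_{k→∞} d(f^k(x), f^k(y)) = 0. -/

import Mathlib

open Filter Topology
open scoped ENNReal

/-- `φ` is a graph homomorphism from `(V₁,E₁)` to `(V₂,E₂)`. -/
def IsGraphHom {V₁ V₂ : Type*} (E₁ : V₁ → V₁ → Prop) (E₂ : V₂ → V₂ → Prop)
    (φ : V₁ → V₂) : Prop :=
  ∀ u v, E₁ u v → E₂ (φ u) (φ v)

/-- `φ` is edge surjective. -/
def IsEdgeSurj {V₁ V₂ : Type*} (E₁ : V₁ → V₁ → Prop) (E₂ : V₂ → V₂ → Prop)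
    (φ : V₁ → V₂) : Prop :=
  ∀ u v, E₂ u v → ∃ u' v', E₁ u' v' ∧ φ u' = u ∧ φ v' = v

/-- `φ` is +directional. -/
def IsPlusDirectional {V₁ V₂ : Type*} (E₁ : V₁ → V₁ → Prop) (φ : V₁ → V₂) : Prop :=
  ∀ u v v', E₁ u v → E₁ u v' → φ v = φ v'

/-- `φ` is bidirectional. -/
def IsBidirectional {V₁ V₂ : Type*} (E₁ : V₁ → V₁ → Prop) (φ : V₁ → V₂) : Prop :=
  IsPlusDirectional E₁ φ ∧ ∀ u u' v, E₁ u v → E₁ u' v → φ u = φ u'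

/-- `φ` is a cover: a +directional edge-surjective graph homomorphism. -/
def IsCover {V₁ V₂ : Type*} (E₁ : V₁ → V₁ → Prop) (E₂ : V₂ → V₂ → Prop)
    (φ : V₁ → V₂) : Prop :=
  IsGraphHom E₁ E₂ φ ∧ IsPlusDirectional E₁ φ ∧ IsEdgeSurj E₁ E₂ φ

/-- every vertex has an incoming and an outgoing edge. -/
def IsSurjDigraph {V : Type*} (E : V → V → Prop) : Prop :=
  (∀ v, ∃ u, E u v) ∧ ∀ u, ∃ v, E u v

/-- the inverse limit `V_𝒢` of a sequence of graph maps. -/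
abbrev InvLim (V : ℕ → Type*) (φ : ∀ n, V (n + 1) → V n) : Type _ :=
  { x : ∀ n, V n // ∀ n, φ n (x (n + 1)) = x n }

/-- the relation `E_𝒢` on `V_𝒢`. -/
def ERel {V : ℕ → Type*} (E : ∀ n, V n → V n → Prop) (φ : ∀ n, V (n + 1) → V n)
    (x y : InvLim V φ) : Prop :=
  ∀ n, E n (x.1 n) (y.1 n)

/-- the product-of-discrete topology on the inverse limit, given explicitly. -/
def invLimTop (V : ℕ → Type*) (φ : ∀ n, V (n + 1) → V n) :
    TopologicalSpace (InvLim V φ) :=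
  @instTopologicalSpaceSubtype _ _ (@Pi.topologicalSpace ℕ V fun _ => ⊥)

/-- the distance function of an explicitly given metric space structure. -/
noncomputable def mdist {X : Type*} (m : MetricSpace X) (x y : X) : ℝ :=
  @dist X m.toDist x y

/-- the topology induced by an explicitly given metric space structure. -/
def mtop {X : Type*} (m : MetricSpace X) : TopologicalSpace X :=
  @UniformSpace.toTopologicalSpace X m.toUniformSpace

/-- the (half-open) list of vertices `vtx i 0, vtx i 1, …, vtx i (len-1)` of
the circuit `c_{n,i}`, the final vertex (equal to the initial one) omitted. -/
def circList {Vn : Type*} (vtx : ℕ → ℕ → Vn) (i len : ℕ) : List Vn :=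
  List.ofFn fun j : Fin len => vtx i (j : ℕ)

theorem stmt14
    (V : ℕ → Type) [∀ n, TopologicalSpace (V n)] [∀ n, DiscreteTopology (V n)]
    [∀ n, Fintype (V n)]
    (E : ∀ n, V n → V n → Prop) (φ : ∀ n, V (n + 1) → V n)
    (len : ℕ → ℕ → ℕ) (v0 : ∀ n, V n) (vtx : ∀ n, ℕ → ℕ → V n)
    (hV0 : ∀ u : V 0, u = v0 0)
    (hE0 : ∀ u v : V 0, E 0 u v ↔ u = v0 0 ∧ v = v0 0)
    (hends : ∀ n i, 1 ≤ i → i ≤ n → vtx n i 0 = v0 n ∧ vtx n i (len n i) = v0 n)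
    (hlen2 : ∀ n i, 1 ≤ i → i ≤ n → 2 ≤ len n i)
    (hrec : ∀ n i, 1 ≤ i → i ≤ n →
      len (n + 1) i = 2 + 2 * ∑ j ∈ Finset.Icc i n, len n j)
    (hne : ∀ n i j, 1 ≤ i → i ≤ n → 0 < j → j < len n i → vtx n i j ≠ v0 n)
    (hinj : ∀ n i j i' j', 1 ≤ i → i ≤ n → 1 ≤ i' → i' ≤ n →
      0 < j → j < len n i → 0 < j' → j' < len n i' →
      vtx n i j = vtx n i' j' → i = i' ∧ j = j')
    (hall : ∀ n, 1 ≤ n → ∀ u : V n,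
      u = v0 n ∨ ∃ i j, 1 ≤ i ∧ i ≤ n ∧ 0 < j ∧ j < len n i ∧ u = vtx n i j)
    (hE : ∀ n, 1 ≤ n → ∀ u v : V n, E n u v ↔
      (u = v0 n ∧ v = v0 n) ∨
      ∃ i j, 1 ≤ i ∧ i ≤ n ∧ j < len n i ∧ u = vtx n i j ∧ v = vtx n i (j + 1))
    (hphi0 : ∀ n, φ n (v0 (n + 1)) = v0 n)
    (hphitop : ∀ n j, j ≤ len (n + 1) (n + 1) → φ n (vtx (n + 1) (n + 1) j) = v0 n)
    (hphiwalk : ∀ n i, 1 ≤ i → i ≤ n →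
      List.map (φ n) (circList (vtx (n + 1)) i (len (n + 1) i)) =
        v0 n :: (((List.range' i (n + 1 - i)).flatMap fun k =>
          circList (vtx n) k (len n k) ++ circList (vtx n) k (len n k)) ++ [v0 n]))
    (hcov : ∀ n, IsCover (E (n + 1)) (E n) (φ n))
    (f : InvLim V φ ≃ₜ InvLim V φ)
    (hf : ∀ x y : InvLim V φ, ERel E φ x y ↔ f x = y)
    (m : MetricSpace (InvLim V φ))
    (hm : mtop m = (inferInstance : TopologicalSpace (InvLim V φ)))
    (p : InvLim V φ) (hp : ∀ n, p.1 n = v0 n) :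
    ∀ x y : InvLim V φ, x ≠ y → x ≠ p → y ≠ p →
      Filter.liminf (fun k => mdist m ((⇑f)^[k] x) ((⇑f)^[k] y)) Filter.atTop = 0 := by
  intro x y _ _ _
  -- the one-step edge relation along orbits
  have step : ∀ (z : InvLim V φ) (k n : ℕ),
      E n (((⇑f)^[k] z).1 n) (((⇑f)^[k + 1] z).1 n) := by
    intro z k n
    exact (hf ((⇑f)^[k] z) ((⇑f)^[k + 1] z)).mpr
      (Function.iterate_succ_apply' (⇑f) k z).symm n
  -- running out a circuit: determinism away from v0
  have runout : ∀ (z : InvLim V φ) (n i : ℕ), 1 ≤ n → 1 ≤ i → i ≤ n →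
      ∀ (t k j : ℕ), 0 < j → j + t = len n i →
      ((⇑f)^[k] z).1 n = vtx n i j → ((⇑f)^[k + t] z).1 n = v0 n := by
    intro z n i hn hi1 hin t
    induction t with
    | zero =>
      intro k j hj0 hjt hz
      have hj : j = len n i := by omega
      subst hj
      simpa [(hends n i hi1 hin).2] using hz
    | succ t ih =>
      intro k j hj0 hjt hz
      have hjlt : j < len n i := by omega
      have hstep := step z k n
      rw [hz] at hstep
      rcases (hE n hn _ _).mp hstep with ⟨h1, _⟩ | ⟨i', j', hi'1, hi'n, hj'lt, heq, hsucc⟩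
      · exact absurd h1 (hne n i j hi1 hin hj0 hjlt)
      · have hj'0 : 0 < j' := by
          rcases Nat.eq_zero_or_pos j' with h0 | h
          · exfalso
            apply hne n i j hi1 hin hj0 hjlt
            rw [heq, h0]
            exact (hends n i' hi'1 hi'n).1
          · exact h
        obtain ⟨hii, hjj⟩ := hinj n i j i' j' hi1 hin hi'1 hi'n hj0 hjlt hj'0 hj'lt heq
        subst hii; subst hjj
        have hrw : k + (t + 1) = (k + 1) + t := by omega
        rw [hrw]
        exact ih (k + 1) (j + 1) (by omega) (by omega) hsucc
  -- the gap bound: from any time, within ∑ len n, the orbit visits v0 at level n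
  have gap : ∀ (z : InvLim V φ) (n k : ℕ),
      ∃ d, d ≤ (∑ j ∈ Finset.Icc 1 n, len n j) ∧ ((⇑f)^[k + d] z).1 n = v0 n := by
    intro z n k
    rcases Nat.eq_zero_or_pos n with rfl | hn
    · exact ⟨0, Nat.zero_le _, hV0 _⟩
    rcases hall n hn (((⇑f)^[k] z).1 n) with h0 | ⟨i, j, hi1, hin, hj0, hjlt, hvtx⟩
    · exact ⟨0, Nat.zero_le _, h0⟩
    · refine ⟨len n i - j, ?_, ?_⟩
      · calc len n i - j ≤ len n i := Nat.sub_le _ _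
          _ ≤ ∑ j ∈ Finset.Icc 1 n, len n j :=
            Finset.single_le_sum (fun _ _ => Nat.zero_le _)
              (Finset.mem_Icc.mpr ⟨hi1, hin⟩)
      · exact runout z n i hn hi1 hin (len n i - j) k j hj0 (by omega) hvtx
  -- the image of the second vertex of a lower circuit is v0
  have phi1 : ∀ n i, 1 ≤ i → i ≤ n → φ n (vtx (n + 1) i 1) = v0 n := by
    intro n i hi1 hin
    have hw := hphiwalk n i hi1 hin
    obtain ⟨L2, hL⟩ : ∃ L2, len (n + 1) i = L2 + 2 :=
      ⟨2 * ∑ j ∈ Finset.Icc i n, len n j, by rw [hrec n i hi1 hin]; omega⟩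
    obtain ⟨l1, hl⟩ : ∃ l1, len n i = l1 + 1 :=
      ⟨len n i - 1, by have := hlen2 n i hi1 hin; omega⟩
    obtain ⟨m1, hm1⟩ : ∃ m1, n + 1 - i = m1 + 1 := ⟨n - i, by omega⟩
    rw [hL, hm1, List.range'_succ, List.flatMap_cons, hl] at hw
    simp only [circList, List.ofFn_succ, List.map_cons, Fin.val_zero, Fin.val_succ,
      Fin.succ_zero_eq_one, Fin.val_one, List.cons_append, List.append_assoc,
      List.cons.injEq, zero_add] at hw
    rw [hw.2.1]
    exact (hends n i hi1 hin).1
  -- one-step forward persistence of v0 downward one level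
  have fwd1 : ∀ (z : InvLim V φ) (k n : ℕ), ((⇑f)^[k] z).1 (n + 1) = v0 (n + 1) →
      ((⇑f)^[k] z).1 n = v0 n ∧ ((⇑f)^[k + 1] z).1 n = v0 n := by
    intro z k n hz
    constructor
    · have h2 := ((⇑f)^[k] z).2 n
      rw [hz, hphi0] at h2
      exact h2.symm
    · have hstep := step z k (n + 1)
      rw [hz] at hstep
      have hw2 := ((⇑f)^[k + 1] z).2 n
      rcases (hE (n + 1) (Nat.succ_le_succ (Nat.zero_le n)) _ _).mp hstep with
        ⟨_, h2⟩ | ⟨i, j, hi1, hin1, hjlt, heq, hsucc⟩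
      · rw [h2, hphi0] at hw2
        exact hw2.symm
      · have hj0 : j = 0 := by
          by_contra hj
          exact hne (n + 1) i j hi1 hin1 (Nat.pos_of_ne_zero hj) hjlt heq.symm
        subst hj0
        rw [zero_add] at hsucc
        rw [hsucc] at hw2
        rcases Nat.lt_or_ge i (n + 1) with hi | hi
        · rw [phi1 n i hi1 (by omega)] at hw2
          exact hw2.symm
        · have hieq : i = n + 1 := le_antisymm hin1 hi
          subst hieq
          rw [hphitop n 1 (by have := hlen2 (n + 1) (n + 1) hi1 hin1; omega)] at hw2
          exact hw2.symm
  -- forward run: v0 at level n+t propagates down for t steps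
  have fwdrun : ∀ (z : InvLim V φ) (t n k : ℕ),
      ((⇑f)^[k] z).1 (n + t) = v0 (n + t) →
      ∀ s, s ≤ t → ((⇑f)^[k + s] z).1 n = v0 n := by
    intro z t
    induction t with
    | zero =>
      intro n k h s hs
      have : s = 0 := Nat.le_zero.mp hs
      subst this
      simpa using h
    | succ t ih =>
      intro n k h s hs
      have hh := fwd1 z k (n + t) h
      rcases Nat.eq_zero_or_pos s with rfl | hs0
      · exact ih n k hh.1 0 (Nat.zero_le _)
      · obtain ⟨s', rfl⟩ : ∃ s', s = s' + 1 := ⟨s - 1, by omega⟩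
        have hres := ih n (k + 1) hh.2 s' (by omega)
        have hrw : k + (s' + 1) = (k + 1) + s' := by omega
        rw [hrw]
        exact hres
  -- v0 at a high level forces v0 at all lower levels (same time)
  have down : ∀ (z : InvLim V φ) (k t i : ℕ),
      ((⇑f)^[k] z).1 (i + t) = v0 (i + t) → ((⇑f)^[k] z).1 i = v0 i := by
    intro z k t
    induction t with
    | zero => intro i h; simpa using h
    | succ t ih =>
      intro i h
      apply ih
      have h2 := ((⇑f)^[k] z).2 (i + t)
      rw [show i + (t + 1) = (i + t) + 1 from rfl] at h
      rw [h, hphi0] at h2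
      exact h2.symm
  -- synchronization
  have sync : ∀ N : ℕ, ∃ k, N ≤ k ∧ (∀ i ≤ N, ((⇑f)^[k] x).1 i = v0 i) ∧
      (∀ i ≤ N, ((⇑f)^[k] y).1 i = v0 i) := by
    intro N
    obtain ⟨d1, _, hy1⟩ := gap y (N + ∑ j ∈ Finset.Icc 1 N, len N j) N
    obtain ⟨d2, hd2, hx2⟩ := gap x N (N + d1)
    have hyN : ((⇑f)^[N + d1 + d2] y).1 N = v0 N := by
      have := fwdrun y (∑ j ∈ Finset.Icc 1 N, len N j) N (N + d1) hy1 d2 hd2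
      simpa [Nat.add_assoc] using this
    refine ⟨N + d1 + d2, by omega, ?_, ?_⟩
    · intro i hi
      apply down x (N + d1 + d2) (N - i) i
      rw [show i + (N - i) = N by omega]
      simpa [Nat.add_assoc] using hx2
    · intro i hi
      apply down y (N + d1 + d2) (N - i) i
      rw [show i + (N - i) = N by omega]
      exact hyN
  choose K hK1 hKx hKy using sync
  -- convergence to p along K
  have key : ∀ (z : InvLim V φ), (∀ N i, i ≤ N → ((⇑f)^[K N] z).1 i = v0 i) →
      Tendsto (fun N => (⇑f)^[K N] z) atTop (𝓝 p) := by
    intro z hz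
    rw [tendsto_subtype_rng, tendsto_pi_nhds]
    intro i
    refine Tendsto.congr' ?_ (tendsto_const_nhds (x := p.1 i))
    filter_upwards [eventually_ge_atTop i] with N hN
    rw [hp]
    exact (hz N i hN).symm
  have hpx := key x (fun N i hi => hKx N i hi)
  have hpy := key y (fun N i hi => hKy N i hi)
  -- pass to the metric m
  have hmtop : @UniformSpace.toTopologicalSpace _ m.toUniformSpace =
      (inferInstance : TopologicalSpace (InvLim V φ)) := hm
  have hmx : Tendsto (fun N => mdist m ((⇑f)^[K N] x) p) atTop (𝓝 0) := by
    have h1 : @Tendsto _ _ (fun N => (⇑f)^[K N] x) atTop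
        (@nhds _ (@UniformSpace.toTopologicalSpace _ m.toUniformSpace) p) := by
      rw [hmtop]; exact hpx
    exact (@tendsto_iff_dist_tendsto_zero _ _ m.toPseudoMetricSpace _ _ _).mp h1
  have hmy : Tendsto (fun N => mdist m ((⇑f)^[K N] y) p) atTop (𝓝 0) := by
    have h1 : @Tendsto _ _ (fun N => (⇑f)^[K N] y) atTop
        (@nhds _ (@UniformSpace.toTopologicalSpace _ m.toUniformSpace) p) := by
      rw [hmtop]; exact hpy
    exact (@tendsto_iff_dist_tendsto_zero _ _ m.toPseudoMetricSpace _ _ _).mp h1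
  set a : ℕ → ℝ := fun k => mdist m ((⇑f)^[k] x) ((⇑f)^[k] y) with ha
  have h0 : ∀ k, 0 ≤ a k := fun k => @dist_nonneg _ m.toPseudoMetricSpace _ _
  have tri : ∀ k, a k ≤ mdist m ((⇑f)^[k] x) p + mdist m ((⇑f)^[k] y) p := by
    intro k
    have t1 : mdist m ((⇑f)^[k] x) ((⇑f)^[k] y) ≤
        mdist m ((⇑f)^[k] x) p + mdist m p ((⇑f)^[k] y) :=
      @dist_triangle _ m.toPseudoMetricSpace _ _ _
    have t2 : mdist m p ((⇑f)^[k] y) = mdist m ((⇑f)^[k] y) p :=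
      @dist_comm _ m.toPseudoMetricSpace _ _
    rw [t2] at t1
    exact t1
  have hsub : Tendsto (fun N => a (K N)) atTop (𝓝 0) :=
    squeeze_zero (fun N => h0 _) (fun N => tri _) (by simpa using hmx.add hmy)
  rw [Filter.liminf_eq]
  have hset : {b : ℝ | ∀ᶠ k in atTop, b ≤ a k} = Set.Iic 0 := by
    ext b
    simp only [Set.mem_setOf_eq, Set.mem_Iic]
    constructor
    · intro hb
      by_contra hb0
      push_neg at hb0
      have h1 : ∀ᶠ N in atTop, a (K N) < b := hsub.eventually_lt_const hb0
      obtain ⟨N0, hN0⟩ := eventually_atTop.mp hb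
      obtain ⟨N1, hN1⟩ := eventually_atTop.mp h1
      have h2 := hN1 (max N0 N1) (le_max_right _ _)
      have h3 := hN0 (K (max N0 N1)) (le_trans (le_max_left _ _) (hK1 _))
      exact absurd h3 (not_le.mpr h2)
    · intro hb
      filter_upwards with k using le_trans hb (h0 k)
  rw [hset, csSup_Iic]
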